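/- In any simple graph G, the number of subgraphs isomorphic to C₃ ⊕ P₂ (the disjoint union of a triangle and an edge) equals (1/3) ∑_{{st,uv}∈Q} ( ∑_{w ∈ Γ(s)\{s,t,u,v}} a_{tw} + ∑_{w ∈ Γ(u)\{s,t,u,v}} a_{vw} ). -/

import Mathlib

open Finset BigOperators SimpleGraph

namespace CrossVar

variable {V : Type} [Fintype V] [DecidableEq V]

/-- Adjacency indicator `a_{xy}`. -/
def a (G : SimpleGraph V) [DecidableRel G.Adj] (x y : V) : ℚ := if G.Adj x y then 1 else 0

/-- Degree `k_v` as a rational number. -/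
def deg (G : SimpleGraph V) [DecidableRel G.Adj] (v : V) : ℚ := (G.degree v : ℚ)

/-- Sum over the set `Q` of unordered pairs `{st, uv}` of vertex-disjoint (independent) edges of
`G` of a function `f s t u v` (intended to be invariant under `s ↔ t`, `u ↔ v` and
`(s,t) ↔ (u,v)`).  Each unordered pair of independent edges corresponds to exactly `8` ordered
tuples `(s,t,u,v)`, whence the division by `8`. -/
def Qsum (G : SimpleGraph V) [DecidableRel G.Adj] (f : V → V → V → V → ℚ) : ℚ :=
  (∑ s, ∑ t, ∑ u, ∑ v,
    if G.Adj s t ∧ G.Adj u v ∧ s ≠ u ∧ s ≠ v ∧ t ≠ u ∧ t ≠ v then f s t u v else 0) / 8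

/-- Sum over the unordered edges `{s,t} ∈ E` of `f s t` (intended for symmetric `f`);
each unordered edge corresponds to two ordered adjacent pairs, whence the division by `2`. -/
def edgeSum (G : SimpleGraph V) [DecidableRel G.Adj] (f : V → V → ℚ) : ℚ :=
  (∑ s, ∑ t, if G.Adj s t then f s t else 0) / 2

/-- The number of subgraphs of `G` isomorphic to `F` (each unlabeled copy counted once). -/
noncomputable def copyCount {α : Type} (G : SimpleGraph V) (F : SimpleGraph α) : ℕ :=
  Nat.card {H : G.Subgraph // Nonempty (H.coe ≃g F)}

/-- `ξ(v)`: the sum of the degrees of the neighbours of `v`. -/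
def xi (G : SimpleGraph V) [DecidableRel G.Adj] (v : V) : ℚ :=
  ∑ u ∈ G.neighborFinset v, deg G u

/-- The paw graph: a triangle `{0,1,2}` with a pendant edge `{2,3}`. -/
def pawGraph : SimpleGraph (Fin 4) :=
  SimpleGraph.fromRel (fun x y => (x, y) ∈ [((0 : Fin 4), (1 : Fin 4)), (0, 2), (1, 2), (2, 3)])

/-- `C₃ ⊕ P₂`: the disjoint union of a triangle `{0,1,2}` and an edge `{3,4}`. -/
def triEdgeGraph : SimpleGraph (Fin 5) :=
  SimpleGraph.fromRel (fun x y => (x, y) ∈ [((0 : Fin 5), (1 : Fin 5)), (0, 2), (1, 2), (3, 4)])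

instance : DecidableRel triEdgeGraph.Adj := fun x y => by
  simp only [triEdgeGraph, SimpleGraph.fromRel_adj]; infer_instance

def TT (G : SimpleGraph V) [DecidableRel G.Adj] : Type :=
  {f : Fin 5 → V // Function.Injective f ∧ ∀ i j, triEdgeGraph.Adj i j → G.Adj (f i) (f j)}

instance (G : SimpleGraph V) [DecidableRel G.Adj] : Fintype (TT G) := by
  unfold TT; infer_instance

variable (G : SimpleGraph V) [DecidableRel G.Adj]

def toSub (t : TT G) : G.Subgraph where
  verts := Set.range t.1
  Adj x y := ∃ i j, triEdgeGraph.Adj i j ∧ t.1 i = x ∧ t.1 j = y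
  adj_sub := by rintro x y ⟨i, j, hij, rfl, rfl⟩; exact t.2.2 i j hij
  edge_vert := by rintro x y ⟨i, j, _, rfl, _⟩; exact ⟨i, rfl⟩
  symm := ⟨by rintro x y ⟨i, j, hij, rfl, rfl⟩; exact ⟨j, i, hij.symm, rfl, rfl⟩⟩

lemma toSub_verts (t : TT G) : (toSub G t).verts = Set.range t.1 := rfl

lemma toSub_adj (t : TT G) (x y : V) :
    (toSub G t).Adj x y ↔ ∃ i j, triEdgeGraph.Adj i j ∧ t.1 i = x ∧ t.1 j = y := Iff.rfl

lemma toSub_iso (t : TT G) : Nonempty ((toSub G t).coe ≃g triEdgeGraph) := by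
  refine ⟨⟨(Equiv.ofInjective t.1 t.2.1).symm, ?_⟩⟩
  intro a b
  constructor
  · intro h
    show (toSub G t).Adj ↑a ↑b
    refine ⟨_, _, h, ?_, ?_⟩ <;> exact Equiv.apply_ofInjective_symm t.2.1 _
  · rintro ⟨i, j, hij, hi, hj⟩
    have hi' : i = (Equiv.ofInjective t.1 t.2.1).symm a := by
      apply t.2.1; rw [hi]; exact (Equiv.apply_ofInjective_symm t.2.1 a).symm
    have hj' : j = (Equiv.ofInjective t.1 t.2.1).symm b := by
      apply t.2.1; rw [hj]; exact (Equiv.apply_ofInjective_symm t.2.1 b).symm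
    rwa [hi', hj'] at hij

lemma toSub_surj (H : G.Subgraph) (e : H.coe ≃g triEdgeGraph) :
    ∃ t : TT G, toSub G t = H := by
  have hinj : Function.Injective (fun i => (↑(e.symm i) : V)) :=
    Subtype.val_injective.comp e.symm.injective
  refine ⟨⟨fun i => ↑(e.symm i), hinj, ?_⟩, ?_⟩
  · intro i j hij
    have : H.coe.Adj (e.symm i) (e.symm j) := by
      rw [← e.map_rel_iff]; simpa using hij
    exact H.adj_sub this
  · apply SimpleGraph.Subgraph.ext
    · ext x
      constructor
      · rintro ⟨i, rfl⟩; exact (e.symm i).2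
      · intro hx; exact ⟨e ⟨x, hx⟩, by simp⟩
    · ext x y
      show (∃ i j, triEdgeGraph.Adj i j ∧ _ = x ∧ _ = y) ↔ H.Adj x y
      constructor
      · rintro ⟨i, j, hij, rfl, rfl⟩
        have : H.coe.Adj (e.symm i) (e.symm j) := by
          rw [← e.map_rel_iff]; simpa using hij
        exact this
      · intro hxy
        refine ⟨e ⟨x, H.edge_vert hxy⟩, e ⟨y, H.edge_vert hxy.symm⟩, ?_, by simp, by simp⟩
        exact e.map_rel_iff.mpr hxy

def AutT : Type :=
  {g : Equiv.Perm (Fin 5) // ∀ i j, triEdgeGraph.Adj i j ↔ triEdgeGraph.Adj (g i) (g j)}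

instance : Fintype AutT := by unfold AutT; infer_instance

lemma card_AutT : Fintype.card AutT = 12 := by decide

def act (t : TT G) (g : AutT) : TT G :=
  ⟨t.1 ∘ g.1, t.2.1.comp g.1.injective, fun i j hij => t.2.2 _ _ ((g.2 i j).mp hij)⟩

lemma toSub_act (t : TT G) (g : AutT) : toSub G (act G t g) = toSub G t := by
  apply SimpleGraph.Subgraph.ext
  · show Set.range (t.1 ∘ g.1) = Set.range t.1
    rw [Set.range_comp, Equiv.range_eq_univ, Set.image_univ]
  · ext x y
    constructor
    · rintro ⟨i, j, hij, rfl, rfl⟩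
      exact ⟨g.1 i, g.1 j, (g.2 i j).mp hij, rfl, rfl⟩
    · rintro ⟨i, j, hij, rfl, rfl⟩
      exact ⟨g.1.symm i, g.1.symm j, (g.2 _ _).mpr (by simpa using hij), by simp [act], by simp [act]⟩

lemma toSub_eq_iff (t t' : TT G) (h : toSub G t' = toSub G t) : ∃ g : AutT, t' = act G t g := by
  have hverts : Set.range t'.1 = Set.range t.1 := congrArg SimpleGraph.Subgraph.verts h
  have hmem : ∀ i, t'.1 i ∈ Set.range t.1 := fun i => hverts ▸ Set.mem_range_self i
  set g0 : Fin 5 → Fin 5 := fun i => (Equiv.ofInjective t.1 t.2.1).symm ⟨t'.1 i, hmem i⟩ with hg0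
  have hval : ∀ i, t.1 (g0 i) = t'.1 i := fun i => Equiv.apply_ofInjective_symm t.2.1 _
  have hinj : Function.Injective g0 := by
    intro i j hij
    apply t'.2.1
    rw [← hval i, ← hval j, hij]
  have hadj : ∀ i j, triEdgeGraph.Adj i j ↔ triEdgeGraph.Adj (g0 i) (g0 j) := by
    intro i j
    constructor
    · intro hij
      have : (toSub G t).Adj (t'.1 i) (t'.1 j) := h ▸ ⟨i, j, hij, rfl, rfl⟩
      obtain ⟨i', j', hij', hi', hj'⟩ := this
      have : i' = g0 i := t.2.1 (by rw [hi', hval])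
      have : j' = g0 j := t.2.1 (by rw [hj', hval])
      subst_vars; exact hij'
    · intro hij
      have : (toSub G t').Adj (t'.1 i) (t'.1 j) := by
        rw [h]; exact ⟨g0 i, g0 j, hij, hval i, hval j⟩
      obtain ⟨i', j', hij', hi', hj'⟩ := this
      have : i' = i := t'.2.1 hi'
      have : j' = j := t'.2.1 hj'
      subst_vars; exact hij'
  refine ⟨⟨Equiv.ofBijective g0 (Finite.injective_iff_bijective.mp hinj), hadj⟩, ?_⟩
  apply Subtype.ext
  funext i
  exact (hval i).symm

noncomputable def copyOf (t : TT G) : {H : G.Subgraph // Nonempty (H.coe ≃g triEdgeGraph)} :=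
  ⟨toSub G t, toSub_iso G t⟩

noncomputable def fiberEquiv (c : {H : G.Subgraph // Nonempty (H.coe ≃g triEdgeGraph)}) :
    {t : TT G // copyOf G t = c} ≃ AutT := by
  have hex := toSub_surj G c.1 c.2.some
  set t₀ := hex.choose with ht₀def
  have ht₀ : toSub G t₀ = c.1 := hex.choose_spec
  refine (Equiv.ofBijective (fun g : AutT => (⟨act G t₀ g, ?_⟩ : {t : TT G // copyOf G t = c})) ⟨?_, ?_⟩).symm
  · apply Subtype.ext; rw [show (copyOf G (act G t₀ g)).1 = toSub G (act G t₀ g) from rfl, toSub_act, ht₀]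
  · intro g g' hgg'
    have : (act G t₀ g).1 = (act G t₀ g').1 := congrArg _ (congrArg Subtype.val hgg')
    apply Subtype.ext; apply Equiv.ext; intro i
    exact t₀.2.1 (congrFun this i)
  · rintro ⟨t, ht⟩
    have : toSub G t = toSub G t₀ := by
      rw [ht₀]; exact congrArg Subtype.val ht
    obtain ⟨g, hg⟩ := toSub_eq_iff G t₀ t this
    exact ⟨g, Subtype.ext hg.symm⟩

lemma card_TT : Fintype.card (TT G) =
    12 * Nat.card {H : G.Subgraph // Nonempty (H.coe ≃g triEdgeGraph)} := by
  rw [← Nat.card_eq_fintype_card]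
  calc Nat.card (TT G) = Nat.card (Σ c : {H : G.Subgraph // Nonempty (H.coe ≃g triEdgeGraph)},
        {t : TT G // copyOf G t = c}) := (Nat.card_congr (Equiv.sigmaFiberEquiv (copyOf G))).symm
    _ = Nat.card ({H : G.Subgraph // Nonempty (H.coe ≃g triEdgeGraph)} × AutT) :=
        Nat.card_congr (Equiv.sigmaEquivProdOfEquiv (fiberEquiv G))
    _ = _ := by
        rw [Nat.card_prod, Nat.card_eq_fintype_card (α := AutT), card_AutT, Nat.mul_comm]

lemma pattern_iff (R : Fin 5 → Fin 5 → Prop) (hR : Symmetric R) :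
    (∀ i j, triEdgeGraph.Adj i j → R i j) ↔ (R 0 1 ∧ R 0 2 ∧ R 1 2 ∧ R 3 4) := by
  constructor
  · intro h
    exact ⟨h _ _ (by decide), h _ _ (by decide), h _ _ (by decide), h _ _ (by decide)⟩
  · rintro ⟨h1, h2, h3, h4⟩ i j hij
    fin_cases i <;> fin_cases j <;>
      first
      | exact absurd hij (by decide)
      | assumption
      | exact hR ‹_›

lemma inj_iff (s t w u v : V) :
    Function.Injective ![s, t, w, u, v] ↔
      (s ≠ t ∧ s ≠ w ∧ s ≠ u ∧ s ≠ v ∧ t ≠ w ∧ t ≠ u ∧ t ≠ v ∧ w ≠ u ∧ w ≠ v ∧ u ≠ v) := by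
  constructor
  · intro h
    refine ⟨fun he => absurd (h (a₁ := 0) (a₂ := 1) (by simp [he])) (by decide),
      fun he => absurd (h (a₁ := 0) (a₂ := 2) (by simp [he])) (by decide),
      fun he => absurd (h (a₁ := 0) (a₂ := 3) (by simp [he])) (by decide),
      fun he => absurd (h (a₁ := 0) (a₂ := 4) (by simp [he])) (by decide),
      fun he => absurd (h (a₁ := 1) (a₂ := 2) (by simp [he])) (by decide),
      fun he => absurd (h (a₁ := 1) (a₂ := 3) (by simp [he])) (by decide),
      fun he => absurd (h (a₁ := 1) (a₂ := 4) (by simp [he])) (by decide),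
      fun he => absurd (h (a₁ := 2) (a₂ := 3) (by simp [he])) (by decide),
      fun he => absurd (h (a₁ := 2) (a₂ := 4) (by simp [he])) (by decide),
      fun he => absurd (h (a₁ := 3) (a₂ := 4) (by simp [he])) (by decide)⟩
  · rintro ⟨h1, h2, h3, h4, h5, h6, h7, h8, h9, h10⟩ i j hij
    fin_cases i <;> fin_cases j <;> simp_all

/-- combined condition for the first term -/
def D1 (G : SimpleGraph V) [DecidableRel G.Adj] (s t u v w : V) : Prop :=
  (G.Adj s t ∧ G.Adj u v ∧ s ≠ u ∧ s ≠ v ∧ t ≠ u ∧ t ≠ v) ∧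
    (G.Adj s w ∧ w ≠ s ∧ w ≠ t ∧ w ≠ u ∧ w ≠ v) ∧ G.Adj t w

/-- combined condition for the second term -/
def D2 (G : SimpleGraph V) [DecidableRel G.Adj] (s t u v w : V) : Prop :=
  (G.Adj s t ∧ G.Adj u v ∧ s ≠ u ∧ s ≠ v ∧ t ≠ u ∧ t ≠ v) ∧
    (G.Adj u w ∧ w ≠ s ∧ w ≠ t ∧ w ≠ u ∧ w ≠ v) ∧ G.Adj v w

instance (s t u v w : V) : Decidable (D1 G s t u v w) := by unfold D1; infer_instance
instance (s t u v w : V) : Decidable (D2 G s t u v w) := by unfold D2; infer_instance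

lemma mem_iff1 (s t u v w : V) :
    (Function.Injective ![s, t, w, u, v] ∧
      ∀ i j, triEdgeGraph.Adj i j → G.Adj (![s, t, w, u, v] i) (![s, t, w, u, v] j)) ↔
    D1 G s t u v w := by
  rw [inj_iff, pattern_iff _ (fun i j h => G.symm.symm _ _ h)]
  simp only [Matrix.cons_val_zero, Matrix.cons_val_one, Matrix.head_cons,
    Matrix.cons_val_two, Matrix.tail_cons, Matrix.cons_val_three, Matrix.cons_val_four,
    Matrix.head_fin_const]
  unfold D1
  constructor
  · rintro ⟨⟨n1, n2, n3, n4, n5, n6, n7, n8, n9, n10⟩, a1, a2, a3, a4⟩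
    exact ⟨⟨a1, a4, n3, n4, n6, n7⟩, ⟨a2, n2.symm, n5.symm, n8, n9⟩, a3⟩
  · rintro ⟨⟨h1, h2, h3, h4, h5, h6⟩, ⟨h7, h8, h9, h10, h11⟩, h12⟩
    exact ⟨⟨G.ne_of_adj h1, G.ne_of_adj h7, h3, h4, G.ne_of_adj h12, h5, h6, h10, h11,
      G.ne_of_adj h2⟩, h1, h7, h12, h2⟩

lemma mem_iff2 (s t u v w : V) :
    (Function.Injective ![u, v, w, s, t] ∧
      ∀ i j, triEdgeGraph.Adj i j → G.Adj (![u, v, w, s, t] i) (![u, v, w, s, t] j)) ↔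
    D2 G s t u v w := by
  rw [inj_iff, pattern_iff _ (fun i j h => G.symm.symm _ _ h)]
  simp only [Matrix.cons_val_zero, Matrix.cons_val_one, Matrix.head_cons,
    Matrix.cons_val_two, Matrix.tail_cons, Matrix.cons_val_three, Matrix.cons_val_four,
    Matrix.head_fin_const]
  unfold D2
  constructor
  · rintro ⟨⟨n1, n2, n3, n4, n5, n6, n7, n8, n9, n10⟩, a1, a2, a3, a4⟩
    exact ⟨⟨a4, a1, n3.symm, n6.symm, n4.symm, n7.symm⟩, ⟨a2, n8, n9, n2.symm, n5.symm⟩, a3⟩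
  · rintro ⟨⟨h1, h2, h3, h4, h5, h6⟩, ⟨h7, h8, h9, h10, h11⟩, h12⟩
    exact ⟨⟨G.ne_of_adj h2, G.ne_of_adj h7, h3.symm, h5.symm, G.ne_of_adj h12, h4.symm, h6.symm,
      h8, h9, G.ne_of_adj h1⟩, h2, h7, h12, h1⟩

def eqv1 : {p : V × V × V × V × V // D1 G p.1 p.2.1 p.2.2.1 p.2.2.2.1 p.2.2.2.2} ≃ TT G where
  toFun p := ⟨![p.1.1, p.1.2.1, p.1.2.2.2.2, p.1.2.2.1, p.1.2.2.2.1],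
    (mem_iff1 G p.1.1 p.1.2.1 p.1.2.2.1 p.1.2.2.2.1 p.1.2.2.2.2).mpr p.2⟩
  invFun f := ⟨(f.1 0, f.1 1, f.1 3, f.1 4, f.1 2),
    (mem_iff1 G (f.1 0) (f.1 1) (f.1 3) (f.1 4) (f.1 2)).mp (by
      have hf : ![f.1 0, f.1 1, f.1 2, f.1 3, f.1 4] = f.1 := by
        funext i; fin_cases i <;> simp
      rw [hf]; exact f.2)⟩
  left_inv p := by
    apply Subtype.ext
    obtain ⟨⟨s, t, u, v, w⟩, hp⟩ := p
    simp [Matrix.cons_val_zero, Matrix.cons_val_one, Matrix.head_cons]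
  right_inv f := by
    apply Subtype.ext
    funext i; fin_cases i <;> simp

def eqv2 : {p : V × V × V × V × V // D2 G p.1 p.2.1 p.2.2.1 p.2.2.2.1 p.2.2.2.2} ≃ TT G where
  toFun p := ⟨![p.1.2.2.1, p.1.2.2.2.1, p.1.2.2.2.2, p.1.1, p.1.2.1],
    (mem_iff2 G p.1.1 p.1.2.1 p.1.2.2.1 p.1.2.2.2.1 p.1.2.2.2.2).mpr p.2⟩
  invFun f := ⟨(f.1 3, f.1 4, f.1 0, f.1 1, f.1 2),
    (mem_iff2 G (f.1 3) (f.1 4) (f.1 0) (f.1 1) (f.1 2)).mp (by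
      have hf : ![f.1 0, f.1 1, f.1 2, f.1 3, f.1 4] = f.1 := by
        funext i; fin_cases i <;> simp
      rw [hf]; exact f.2)⟩
  left_inv p := by
    apply Subtype.ext
    obtain ⟨⟨s, t, u, v, w⟩, hp⟩ := p
    simp [Matrix.cons_val_zero, Matrix.cons_val_one, Matrix.head_cons]
  right_inv f := by
    apply Subtype.ext
    funext i; fin_cases i <;> simp

lemma sum_D1 : (∑ s, ∑ t, ∑ u, ∑ v, ∑ w, if D1 G s t u v w then (1 : ℚ) else 0) =
    (Fintype.card (TT G) : ℚ) := by
  rw [← Fintype.card_congr (eqv1 G), Fintype.card_subtype]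
  rw [← Finset.sum_boole]
  simp only [Fintype.sum_prod_type]

lemma sum_D2 : (∑ s, ∑ t, ∑ u, ∑ v, ∑ w, if D2 G s t u v w then (1 : ℚ) else 0) =
    (Fintype.card (TT G) : ℚ) := by
  rw [← Fintype.card_congr (eqv2 G), Fintype.card_subtype]
  rw [← Finset.sum_boole]
  simp only [Fintype.sum_prod_type]

lemma key_sum : (∑ s, ∑ t, ∑ u, ∑ v,
    if G.Adj s t ∧ G.Adj u v ∧ s ≠ u ∧ s ≠ v ∧ t ≠ u ∧ t ≠ v then
      ((∑ w, if G.Adj s w ∧ w ≠ s ∧ w ≠ t ∧ w ≠ u ∧ w ≠ v then a G t w else 0) +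
       (∑ w, if G.Adj u w ∧ w ≠ s ∧ w ≠ t ∧ w ≠ u ∧ w ≠ v then a G v w else 0)) else 0)
    = 2 * (Fintype.card (TT G) : ℚ) := by
  have hpt : ∀ s t u v : V,
      (if G.Adj s t ∧ G.Adj u v ∧ s ≠ u ∧ s ≠ v ∧ t ≠ u ∧ t ≠ v then
        ((∑ w, if G.Adj s w ∧ w ≠ s ∧ w ≠ t ∧ w ≠ u ∧ w ≠ v then a G t w else 0) +
         (∑ w, if G.Adj u w ∧ w ≠ s ∧ w ≠ t ∧ w ≠ u ∧ w ≠ v then a G v w else 0)) else 0) =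
      (∑ w, if D1 G s t u v w then (1 : ℚ) else 0) +
      (∑ w, if D2 G s t u v w then (1 : ℚ) else 0) := by
    intro s t u v
    by_cases hC : G.Adj s t ∧ G.Adj u v ∧ s ≠ u ∧ s ≠ v ∧ t ≠ u ∧ t ≠ v
    · rw [if_pos hC]
      have e1 : ∀ w, (if G.Adj s w ∧ w ≠ s ∧ w ≠ t ∧ w ≠ u ∧ w ≠ v then a G t w else 0) =
          (if D1 G s t u v w then (1 : ℚ) else 0) := by
        intro w
        simp only [a]
        by_cases h1 : G.Adj s w ∧ w ≠ s ∧ w ≠ t ∧ w ≠ u ∧ w ≠ v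
        · rw [if_pos h1]
          by_cases h2 : G.Adj t w
          · rw [if_pos h2, if_pos (show D1 G s t u v w from ⟨hC, h1, h2⟩)]
          · rw [if_neg h2, if_neg (show ¬ D1 G s t u v w from fun h => h2 h.2.2)]
        · rw [if_neg h1, if_neg (show ¬ D1 G s t u v w from fun h => h1 h.2.1)]
      have e2 : ∀ w, (if G.Adj u w ∧ w ≠ s ∧ w ≠ t ∧ w ≠ u ∧ w ≠ v then a G v w else 0) =
          (if D2 G s t u v w then (1 : ℚ) else 0) := by
        intro w
        simp only [a]
        by_cases h1 : G.Adj u w ∧ w ≠ s ∧ w ≠ t ∧ w ≠ u ∧ w ≠ v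
        · rw [if_pos h1]
          by_cases h2 : G.Adj v w
          · rw [if_pos h2, if_pos (show D2 G s t u v w from ⟨hC, h1, h2⟩)]
          · rw [if_neg h2, if_neg (show ¬ D2 G s t u v w from fun h => h2 h.2.2)]
        · rw [if_neg h1, if_neg (show ¬ D2 G s t u v w from fun h => h1 h.2.1)]
      exact congrArg₂ (· + ·) (Finset.sum_congr rfl fun w _ => e1 w)
        (Finset.sum_congr rfl fun w _ => e2 w)
    · rw [if_neg hC]
      have h1 : (∑ w, if D1 G s t u v w then (1 : ℚ) else 0) = 0 :=
        Finset.sum_eq_zero fun w _ => by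
          simp only [D1]; exact if_neg fun h => hC ⟨h.1.1, h.1.2.1, h.1.2.2.1, h.1.2.2.2.1, h.1.2.2.2.2⟩
      have h2 : (∑ w, if D2 G s t u v w then (1 : ℚ) else 0) = 0 :=
        Finset.sum_eq_zero fun w _ => by
          simp only [D2]; exact if_neg fun h => hC ⟨h.1.1, h.1.2.1, h.1.2.2.1, h.1.2.2.2.1, h.1.2.2.2.2⟩
      rw [h1, h2, add_zero]
  calc (∑ s, ∑ t, ∑ u, ∑ v,
      if G.Adj s t ∧ G.Adj u v ∧ s ≠ u ∧ s ≠ v ∧ t ≠ u ∧ t ≠ v then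
        ((∑ w, if G.Adj s w ∧ w ≠ s ∧ w ≠ t ∧ w ≠ u ∧ w ≠ v then a G t w else 0) +
         (∑ w, if G.Adj u w ∧ w ≠ s ∧ w ≠ t ∧ w ≠ u ∧ w ≠ v then a G v w else 0)) else 0)
      = ∑ s, ∑ t, ∑ u, ∑ v, ((∑ w, if D1 G s t u v w then (1 : ℚ) else 0) +
        (∑ w, if D2 G s t u v w then (1 : ℚ) else 0)) := by
        refine Finset.sum_congr rfl fun s _ => Finset.sum_congr rfl fun t _ =>
          Finset.sum_congr rfl fun u _ => Finset.sum_congr rfl fun v _ => hpt s t u v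
    _ = (∑ s, ∑ t, ∑ u, ∑ v, ∑ w, if D1 G s t u v w then (1 : ℚ) else 0) +
        (∑ s, ∑ t, ∑ u, ∑ v, ∑ w, if D2 G s t u v w then (1 : ℚ) else 0) := by
        simp only [Finset.sum_add_distrib]
    _ = 2 * (Fintype.card (TT G) : ℚ) := by rw [sum_D1, sum_D2]; ring


theorem stmt4 (G : SimpleGraph V) [DecidableRel G.Adj] :
    (copyCount G triEdgeGraph : ℚ) =
      (1 / 3) * Qsum G (fun s t u v =>
        (∑ w, if G.Adj s w ∧ w ≠ s ∧ w ≠ t ∧ w ≠ u ∧ w ≠ v then a G t w else 0) +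
        (∑ w, if G.Adj u w ∧ w ≠ s ∧ w ≠ t ∧ w ≠ u ∧ w ≠ v then a G v w else 0)) := by
  have hT := card_TT G
  have hQ : (Fintype.card (TT G) : ℚ) =
      12 * (Nat.card {H : G.Subgraph // Nonempty (H.coe ≃g triEdgeGraph)} : ℚ) := by
    exact_mod_cast hT
  simp only [Qsum]
  rw [key_sum G, copyCount, hQ]
  ring

end CrossVar
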